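/- arXiv:2109.10709 — 4 statements merged into one kernel-verified Lean document; each statement's English description precedes it below -/
import Mathlib

section
/- Let ξ, η be {∧,∨}-sequences of length r. Define ξ ⪯ η if ξ can be obtained from η by repeatedly replacing a pair of entries at positions i<j equal to (∨,∧) or (∧,∧) by the opposite pair. Then ξ ⪯ η if and only if ξ and η are conjugate (same length and same number of ∧'s mod 2) and l_i(η,ξ) ≥ 0 for all i ∈ {2,…,r}. -/
/-- Number of `∧`'s (encoded as `true`) in a `{∧,∨}`-sequence. -/
def countWedge {r : ℕ} (η : Fin r → Bool) : ℕ :=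
  (Finset.univ.filter fun k => η k = true).card

/-- `l_i(η)`: the number of positions `j ≥ i` with `η_j = ∧`. -/
def lFrom {r : ℕ} (η : Fin r → Bool) (i : Fin r) : ℕ :=
  (Finset.univ.filter fun j => i ≤ j ∧ η j = true).card

/-- One elementary move: `ξ` is obtained from `η` by replacing a pair of entries at
positions `i < j` equal to `(∨,∧)` or `(∧,∧)` by the opposite pair. -/
def ArrowStep {r : ℕ} (η ξ : Fin r → Bool) : Prop :=
  ∃ i j : Fin r, i < j ∧ η j = true ∧ ξ i = !(η i) ∧ ξ j = !(η j) ∧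
    ∀ k : Fin r, k ≠ i → k ≠ j → ξ k = η k

/-- `ξ ⪯ η`: `ξ` is obtained from `η` by repeatedly applying elementary moves. -/
def PrecEq {r : ℕ} (ξ η : Fin r → Bool) : Prop :=
  Relation.ReflTransGen ArrowStep η ξ

def Lnat {r : ℕ} (η : Fin r → Bool) (p : ℕ) : ℕ :=
  (Finset.univ.filter fun k : Fin r => p ≤ (k : ℕ) ∧ η k = true).card

lemma Lnat_eq_sum {r : ℕ} (η : Fin r → Bool) (p : ℕ) :
    Lnat η p = ∑ k : Fin r, if p ≤ (k : ℕ) ∧ η k = true then 1 else 0 :=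
  Finset.card_filter _ _

lemma Lnat_zero_of_ge {r : ℕ} (η : Fin r → Bool) {p : ℕ} (h : r ≤ p) : Lnat η p = 0 := by
  rw [Lnat_eq_sum]
  apply Finset.sum_eq_zero
  intro k _
  have := k.isLt
  have : ¬ (p ≤ (k:ℕ) ∧ η k = true) := by omega
  simp [this]

lemma Lnat_anti {r : ℕ} (η : Fin r → Bool) {p q : ℕ} (h : p ≤ q) : Lnat η q ≤ Lnat η p := by
  apply Finset.card_le_card
  intro k hk
  simp only [Finset.mem_filter, Finset.mem_univ, true_and] at hk ⊢
  exact ⟨le_trans h hk.1, hk.2⟩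

lemma Lnat_succ {r : ℕ} (η : Fin r → Bool) (p : ℕ) (h : p < r) :
    Lnat η p = (if η ⟨p, h⟩ = true then 1 else 0) + Lnat η (p + 1) := by
  set c : Fin r := ⟨p, h⟩ with hc
  rw [Lnat_eq_sum, Lnat_eq_sum]
  rw [← Finset.add_sum_erase _ _ (Finset.mem_univ c),
      ← Finset.add_sum_erase _ (fun k : Fin r => if p + 1 ≤ (k:ℕ) ∧ η k = true then 1 else 0)
        (Finset.mem_univ c)]
  have h1 : (if p ≤ (c:ℕ) ∧ η c = true then 1 else 0) = (if η c = true then 1 else 0) := by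
    simp [hc]
  have h2 : (if p + 1 ≤ (c:ℕ) ∧ η c = true then 1 else 0) = 0 := by
    simp [hc]
  have h3 : ∑ k ∈ Finset.univ.erase c, (if p ≤ (k:ℕ) ∧ η k = true then 1 else 0)
      = ∑ k ∈ Finset.univ.erase c, (if p + 1 ≤ (k:ℕ) ∧ η k = true then 1 else 0) := by
    apply Finset.sum_congr rfl
    intro k hk
    have hkc : k ≠ c := (Finset.mem_erase.mp hk).1
    have hkv : (k:ℕ) ≠ p := by
      intro hkv; apply hkc; exact Fin.ext hkv
    have : (p ≤ (k:ℕ)) ↔ (p + 1 ≤ (k:ℕ)) := by omega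
    simp only [this]
  omega

lemma Lnat_ext {r : ℕ} {η ξ : Fin r → Bool} (h : ∀ p, Lnat ξ p = Lnat η p) : ξ = η := by
  funext k
  have h1 := Lnat_succ ξ (k:ℕ) k.isLt
  have h2 := Lnat_succ η (k:ℕ) k.isLt
  have e1 := h (k:ℕ)
  have e2 := h ((k:ℕ) + 1)
  have hk : (⟨(k:ℕ), k.isLt⟩ : Fin r) = k := rfl
  rw [hk] at h1 h2
  cases hξ : ξ k <;> cases hη : η k <;> simp only [hξ, hη, if_true, if_false] at h1 h2 <;> simp_all <;> omega

lemma diff2 {r : ℕ} {η ξ : Fin r → Bool} {i j : Fin r} (hij : i ≠ j)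
    (hoff : ∀ k, k ≠ i → k ≠ j → ξ k = η k) (p : ℕ) :
    Lnat ξ p + ((if p ≤ (i:ℕ) ∧ η i = true then 1 else 0) + (if p ≤ (j:ℕ) ∧ η j = true then 1 else 0))
    = Lnat η p + ((if p ≤ (i:ℕ) ∧ ξ i = true then 1 else 0) + (if p ≤ (j:ℕ) ∧ ξ j = true then 1 else 0)) := by
  have hji : j ∈ Finset.univ.erase i := Finset.mem_erase.mpr ⟨Ne.symm hij, Finset.mem_univ j⟩
  have split : ∀ f : Fin r → Bool, Lnat f p = (if p ≤ (i:ℕ) ∧ f i = true then 1 else 0)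
      + ((if p ≤ (j:ℕ) ∧ f j = true then 1 else 0)
        + ∑ k ∈ (Finset.univ.erase i).erase j, (if p ≤ (k:ℕ) ∧ f k = true then 1 else 0)) := by
    intro f
    rw [Lnat_eq_sum, ← Finset.add_sum_erase _ _ (Finset.mem_univ i),
      ← Finset.add_sum_erase _ _ hji]
  have tails : ∑ k ∈ (Finset.univ.erase i).erase j, (if p ≤ (k:ℕ) ∧ ξ k = true then 1 else 0)
      = ∑ k ∈ (Finset.univ.erase i).erase j, (if p ≤ (k:ℕ) ∧ η k = true then 1 else 0) := by
    apply Finset.sum_congr rfl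
    intro k hk
    rw [Finset.mem_erase, Finset.mem_erase] at hk
    rw [hoff k hk.2.1 hk.1]
  rw [split ξ, split η, tails]
  omega

lemma lFrom_eq {r : ℕ} (η : Fin r → Bool) (i : Fin r) : lFrom η i = Lnat η (i : ℕ) := by
  unfold lFrom Lnat
  apply congrArg
  apply Finset.filter_congr
  intro k _
  rw [Fin.le_def]

lemma countWedge_eq {r : ℕ} (η : Fin r → Bool) : countWedge η = Lnat η 0 := by
  unfold countWedge Lnat
  congr 1
  apply Finset.filter_congr
  intro k _
  simp

lemma step_facts {r : ℕ} {η ξ : Fin r → Bool} (h : ArrowStep η ξ) :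
    Lnat ξ 0 % 2 = Lnat η 0 % 2 ∧ ∀ p, Lnat ξ p ≤ Lnat η p := by
  obtain ⟨i, j, hij, hj, hxi, hxj, hoff⟩ := h
  have hne : i ≠ j := ne_of_lt hij
  have hijn : (i : ℕ) < (j : ℕ) := hij
  have key := diff2 hne hoff
  constructor
  · have k0 := key 0
    rw [hxi, hxj, hj] at k0
    cases hi : η i <;> simp [hi] at k0 <;> omega
  · intro p
    have kp := key p
    rw [hxi, hxj, hj] at kp
    by_cases hpi : p ≤ (i : ℕ) <;> by_cases hpj : p ≤ (j : ℕ) <;>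
      cases hi : η i <;> simp [hi, hpi, hpj] at kp <;> omega

lemma exists_j {r : ℕ} {η ξ : Fin r → Bool} (h : ∃ p, Lnat ξ p < Lnat η p ∧ p < r)
    (hL : ∀ p, Lnat ξ p ≤ Lnat η p) :
    ∃ j, j < r ∧ Lnat ξ j < Lnat η j ∧ ∀ q, j < q → Lnat ξ q = Lnat η q := by
  obtain ⟨p0, hp0, hp0r⟩ := h
  refine ⟨Nat.findGreatest (fun p => Lnat ξ p < Lnat η p) r, ?_, ?_, ?_⟩
  · rcases lt_or_eq_of_le (Nat.findGreatest_le (P := fun p => Lnat ξ p < Lnat η p) r) with h | h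
    · exact h
    · exfalso
      have := Nat.findGreatest_spec (P := fun p => Lnat ξ p < Lnat η p) (le_of_lt hp0r) hp0
      rw [h] at this
      rw [Lnat_zero_of_ge η (le_refl r)] at this
      omega
  · exact Nat.findGreatest_spec (P := fun p => Lnat ξ p < Lnat η p) (le_of_lt hp0r) hp0
  · intro q hq
    rcases le_or_gt q r with hqr | hqr
    · have h2 := Nat.findGreatest_is_greatest (P := fun p => Lnat ξ p < Lnat η p) hq hqr
      have h3 := hL q
      simp only [not_lt] at h2
      omega
    · rw [Lnat_zero_of_ge η (by omega), Lnat_zero_of_ge ξ (by omega)]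

lemma exists_i1 {r : ℕ} {η ξ : Fin r → Bool} {j : ℕ} (hPj : Lnat ξ j < Lnat η j)
    (hc : ∃ p, p ≤ j ∧ Lnat ξ p = Lnat η p) (hL : ∀ p, Lnat ξ p ≤ Lnat η p) :
    ∃ i, i < j ∧ Lnat ξ i = Lnat η i ∧ ∀ q, i < q → q ≤ j → Lnat ξ q < Lnat η q := by
  obtain ⟨q0, hq0j, hq0⟩ := hc
  refine ⟨Nat.findGreatest (fun p => Lnat ξ p = Lnat η p) j, ?_,
    Nat.findGreatest_spec (P := fun p => Lnat ξ p = Lnat η p) hq0j hq0, ?_⟩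
  · rcases lt_or_eq_of_le (Nat.findGreatest_le (P := fun p => Lnat ξ p = Lnat η p) j) with h | h
    · exact h
    · exfalso
      have := Nat.findGreatest_spec (P := fun p => Lnat ξ p = Lnat η p) hq0j hq0
      rw [h] at this
      omega
  · intro q h1 h2
    have := Nat.findGreatest_is_greatest (P := fun p => Lnat ξ p = Lnat η p) h1 h2
    have h3 := hL q
    omega

lemma exists_i2 {r : ℕ} {η ξ : Fin r → Bool} {j : ℕ} (hd1 : Lnat η j = Lnat ξ j + 1)
    (h0 : Lnat ξ 0 + 2 ≤ Lnat η 0) :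
    ∃ m, 1 ≤ m ∧ m ≤ j ∧ Lnat η m ≤ Lnat ξ m + 1 ∧ ∀ q, q < m → ¬ (Lnat η q ≤ Lnat ξ q + 1) := by
  have hex : ∃ p, Lnat η p ≤ Lnat ξ p + 1 := ⟨j, by omega⟩
  refine ⟨Nat.find hex, ?_, Nat.find_min' hex (by omega), Nat.find_spec hex, fun q hq => Nat.find_min hex hq⟩
  by_contra h
  have h0' : Nat.find hex = 0 := by omega
  have := Nat.find_spec hex
  rw [h0'] at this
  omega

lemma back {r : ℕ} (n : ℕ) : ∀ η ξ : Fin r → Bool,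
    (∑ p ∈ Finset.range r, Lnat η p) ≤ n →
    Lnat ξ 0 % 2 = Lnat η 0 % 2 →
    (∀ p, Lnat ξ p ≤ Lnat η p) → PrecEq ξ η := by
  induction n with
  | zero =>
    intro η ξ hn hpar hL
    by_cases hall : ∀ p, Lnat ξ p = Lnat η p
    · rw [Lnat_ext hall]
      exact Relation.ReflTransGen.refl
    · exfalso
      push_neg at hall
      obtain ⟨p0, hp0⟩ := hall
      have hlt : Lnat ξ p0 < Lnat η p0 := lt_of_le_of_ne (hL p0) hp0
      have hp0r : p0 < r := by
        by_contra hr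
        rw [Lnat_zero_of_ge η (by omega)] at hlt
        omega
      have : Lnat η p0 ≤ ∑ p ∈ Finset.range r, Lnat η p :=
        Finset.single_le_sum (fun p _ => Nat.zero_le _) (Finset.mem_range.mpr hp0r)
      omega
  | succ n ih =>
    intro η ξ hn hpar hL
    by_cases hall : ∀ p, Lnat ξ p = Lnat η p
    · rw [Lnat_ext hall]
      exact Relation.ReflTransGen.refl
    · push_neg at hall
      obtain ⟨p0, hp0⟩ := hall
      have hp0lt : Lnat ξ p0 < Lnat η p0 := lt_of_le_of_ne (hL p0) hp0
      have hp0r : p0 < r := by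
        by_contra hr
        rw [Lnat_zero_of_ge η (by omega)] at hp0lt
        omega
      obtain ⟨j, hjr, hPj, hgt⟩ := exists_j ⟨p0, hp0lt, hp0r⟩ hL
      have hrj := Lnat_succ η j hjr
      have hrjξ := Lnat_succ ξ j hjr
      have hEq1 : Lnat ξ (j + 1) = Lnat η (j + 1) := hgt (j + 1) (by omega)
      have bη : (if η ⟨j, hjr⟩ = true then 1 else 0) ≤ 1 := by split <;> omega
      have bξ : (if ξ ⟨j, hjr⟩ = true then 1 else 0) ≤ 1 := by split <;> omega
      have hηj : η ⟨j, hjr⟩ = true := by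
        cases hη : η ⟨j, hjr⟩
        · exfalso; rw [hη] at hrj; simp at hrj; omega
        · rfl
      have hd1 : Lnat η j = Lnat ξ j + 1 := by
        rw [hηj] at hrj; simp at hrj; omega
      by_cases hc : ∃ p, p ≤ j ∧ Lnat ξ p = Lnat η p
      · -- Case 1: move (∨,∧) → (∧,∨)
        obtain ⟨i, hij', hi_eq, hmid⟩ := exists_i1 hPj hc hL
        have hir : i < r := lt_trans hij' hjr
        have hri := Lnat_succ η i hir
        have hriξ := Lnat_succ ξ i hir
        have hmi : Lnat ξ (i + 1) < Lnat η (i + 1) := hmid (i + 1) (by omega) (by omega)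
        have bηi : (if η ⟨i, hir⟩ = true then 1 else 0) ≤ 1 := by split <;> omega
        have bξi : (if ξ ⟨i, hir⟩ = true then 1 else 0) ≤ 1 := by split <;> omega
        have hηi : η ⟨i, hir⟩ = false := by
          cases hη : η ⟨i, hir⟩
          · rfl
          · exfalso; rw [hη] at hri; simp at hri; omega
        have hfij : (⟨i, hir⟩ : Fin r) ≠ ⟨j, hjr⟩ := Fin.ne_of_val_ne (by simpa using Nat.ne_of_lt hij')
        set η' : Fin r → Bool :=
          fun k => if k = ⟨i, hir⟩ then true else if k = ⟨j, hjr⟩ then false else η k with hη'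
        have hη'i : η' ⟨i, hir⟩ = true := by simp [hη']
        have hη'j : η' ⟨j, hjr⟩ = false := by simp [hη', hfij.symm]
        have hoff' : ∀ k, k ≠ ⟨i, hir⟩ → k ≠ ⟨j, hjr⟩ → η' k = η k := by
          intro k h1 h2; simp [hη', h1, h2]
        have hstep : ArrowStep η η' := by
          refine ⟨⟨i, hir⟩, ⟨j, hjr⟩, ?_, hηj, ?_, ?_, hoff'⟩
          · exact Fin.mk_lt_mk.mpr hij'
          · rw [hη'i, hηi]; rfl
          · rw [hη'j, hηj]; rfl
        have key : ∀ p, Lnat η' p + (if p ≤ j then 1 else 0)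
            = Lnat η p + (if p ≤ i then 1 else 0) := by
          intro p
          have k := diff2 hfij hoff' p
          rw [hη'i, hη'j, hηi, hηj] at k
          simp only [Fin.val_mk] at k
          simp at k
          omega
        have hL' : ∀ p, Lnat ξ p ≤ Lnat η' p := by
          intro p
          have k := key p
          have hLp := hL p
          by_cases hpi : p ≤ i <;> by_cases hpj : p ≤ j <;> simp [hpi, hpj] at k
          · omega
          · omega
          · have := hmid p (by omega) (by omega); omega
          · omega
        have hpar' := (step_facts hstep).1
        have hle' := (step_facts hstep).2
        have hstrict : Lnat η' j < Lnat η j := by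
          have k := key j
          have h1 : ¬ (j ≤ i) := by omega
          simp [h1] at k
          omega
        have hsum : ∑ p ∈ Finset.range r, Lnat η' p < ∑ p ∈ Finset.range r, Lnat η p := by
          apply Finset.sum_lt_sum (fun p _ => hle' p)
          exact ⟨j, Finset.mem_range.mpr hjr, hstrict⟩
        exact Relation.ReflTransGen.head hstep (ih η' ξ (by omega) (by omega) hL')
      · -- Case 2: move (∧,∧) → (∨,∨)
        push_neg at hc
        have hlt : ∀ p, p ≤ j → Lnat ξ p < Lnat η p := fun p hp =>
          lt_of_le_of_ne (hL p) (hc p hp)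
        have h0 : Lnat ξ 0 + 2 ≤ Lnat η 0 := by
          have := hlt 0 (Nat.zero_le j)
          omega
        obtain ⟨m, hm1, hmj, hm, hmin'⟩ := exists_i2 hd1 h0
        have hmin : ∀ q, q < m → Lnat ξ q + 2 ≤ Lnat η q := by
          intro q hq
          have := hmin' q hq
          have h2 := hL q
          omega
        have hi2 : Lnat ξ (m - 1) + 2 ≤ Lnat η (m - 1) := hmin (m - 1) (by omega)
        have hij' : m - 1 < j := by omega
        have hir : m - 1 < r := lt_trans hij' hjr
        have hri := Lnat_succ η (m - 1) hir
        have hriξ := Lnat_succ ξ (m - 1) hir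
        have hmm : Lnat η (m - 1 + 1) ≤ Lnat ξ (m - 1 + 1) + 1 := by
          rw [show m - 1 + 1 = m by omega]; exact hm
        have bηi : (if η ⟨m - 1, hir⟩ = true then 1 else 0) ≤ 1 := by split <;> omega
        have bξi : (if ξ ⟨m - 1, hir⟩ = true then 1 else 0) ≤ 1 := by split <;> omega
        have hηi : η ⟨m - 1, hir⟩ = true := by
          cases hη : η ⟨m - 1, hir⟩
          · exfalso; rw [hη] at hri; simp at hri; omega
          · rfl
        have hfij : (⟨m - 1, hir⟩ : Fin r) ≠ ⟨j, hjr⟩ :=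
          Fin.ne_of_val_ne (by simpa using Nat.ne_of_lt hij')
        set η' : Fin r → Bool :=
          fun k => if k = ⟨m - 1, hir⟩ then false else if k = ⟨j, hjr⟩ then false else η k with hη'
        have hη'i : η' ⟨m - 1, hir⟩ = false := by simp [hη']
        have hη'j : η' ⟨j, hjr⟩ = false := by simp [hη', hfij.symm]
        have hoff' : ∀ k, k ≠ ⟨m - 1, hir⟩ → k ≠ ⟨j, hjr⟩ → η' k = η k := by
          intro k h1 h2; simp [hη', h1, h2]
        have hstep : ArrowStep η η' := by
          refine ⟨⟨m - 1, hir⟩, ⟨j, hjr⟩, ?_, hηj, ?_, ?_, hoff'⟩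
          · exact Fin.mk_lt_mk.mpr hij'
          · rw [hη'i, hηi]; rfl
          · rw [hη'j, hηj]; rfl
        have key : ∀ p, Lnat η' p + ((if p ≤ m - 1 then 1 else 0) + (if p ≤ j then 1 else 0))
            = Lnat η p := by
          intro p
          have k := diff2 hfij hoff' p
          rw [hη'i, hη'j, hηi, hηj] at k
          simp only [Fin.val_mk] at k
          simp at k
          omega
        have hL' : ∀ p, Lnat ξ p ≤ Lnat η' p := by
          intro p
          have k := key p
          have hLp := hL p
          by_cases hpi : p ≤ m - 1 <;> by_cases hpj : p ≤ j <;> simp [hpi, hpj] at k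
          · have := hmin p (by omega); omega
          · omega
          · have := hlt p (by omega); omega
          · omega
        have hpar' := (step_facts hstep).1
        have hle' := (step_facts hstep).2
        have hstrict : Lnat η' j < Lnat η j := by
          have k := key j
          have h1 : ¬ (j ≤ m - 1) := by omega
          simp [h1] at k
          omega
        have hsum : ∑ p ∈ Finset.range r, Lnat η' p < ∑ p ∈ Finset.range r, Lnat η p := by
          apply Finset.sum_lt_sum (fun p _ => hle' p)
          exact ⟨j, Finset.mem_range.mpr hjr, hstrict⟩
        exact Relation.ReflTransGen.head hstep (ih η' ξ (by omega) (by omega) hL')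

/-- `ξ ⪯ η` iff `ξ` and `η` are conjugate (same number of `∧`'s mod 2)
and `l_i(η,ξ) ≥ 0`, i.e. `l_i(ξ) ≤ l_i(η)`, for all `i ∈ {2,…,r}` (0-indexed: `i ≥ 1`). -/
theorem precEq_iff {r : ℕ} (ξ η : Fin r → Bool) :
    PrecEq ξ η ↔
      (countWedge ξ % 2 = countWedge η % 2 ∧
        ∀ i : Fin r, 1 ≤ (i : ℕ) → lFrom ξ i ≤ lFrom η i) := by
  constructor
  · intro h
    have key : Lnat ξ 0 % 2 = Lnat η 0 % 2 ∧ ∀ p, Lnat ξ p ≤ Lnat η p := by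
      induction h with
      | refl => exact ⟨rfl, fun p => le_refl _⟩
      | tail hab hbc ih =>
        obtain ⟨h1, h2⟩ := step_facts hbc
        exact ⟨h1.trans ih.1, fun p => (h2 p).trans (ih.2 p)⟩
    refine ⟨?_, ?_⟩
    · rw [countWedge_eq, countWedge_eq]; exact key.1
    · intro i _
      rw [lFrom_eq, lFrom_eq]; exact key.2 i
  · rintro ⟨hpar, hle⟩
    have hpar' : Lnat ξ 0 % 2 = Lnat η 0 % 2 := by
      rw [← countWedge_eq, ← countWedge_eq]; exact hpar
    have hL1 : ∀ p, 1 ≤ p → Lnat ξ p ≤ Lnat η p := by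
      intro p hp
      rcases lt_or_ge p r with hpr | hpr
      · have := hle ⟨p, hpr⟩ hp
        rw [lFrom_eq, lFrom_eq] at this
        exact this
      · rw [Lnat_zero_of_ge ξ hpr, Lnat_zero_of_ge η hpr]
    have hL : ∀ p, Lnat ξ p ≤ Lnat η p := by
      intro p
      rcases Nat.eq_zero_or_pos p with rfl | hp
      · rcases Nat.eq_zero_or_pos r with rfl | hr
        · rw [Lnat_zero_of_ge ξ (le_refl 0), Lnat_zero_of_ge η (le_refl 0)]
        · have h1 := Lnat_succ ξ 0 hr
          have h2 := Lnat_succ η 0 hr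
          have h3 := hL1 (0 + 1) (le_refl 1)
          have bξ : (if ξ ⟨0, hr⟩ = true then 1 else 0) ≤ 1 := by split <;> omega
          have bη : (0 : ℕ) ≤ (if η ⟨0, hr⟩ = true then 1 else 0) := by omega
          omega
      · exact hL1 p hp
    exact back (∑ p ∈ Finset.range r, Lnat η p) η ξ (le_refl _) hpar' hL
end

section
/- Let ξ ⪯ η be {∧,∨}-sequences of length r. Then l(η,ξ) = l(η) − l(ξ) is the minimal number of elementary operations (replacing (∧,∧) in the first two positions, or a consecutive (∨,∧), by the opposite pair) needed to obtain ξ from η; moreover every chain of elementary operations transforming η into ξ has length exactly l(η,ξ). -/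
/-- `l(η) = Σ_{i=2}^{r} l_i(η)` (0-indexed: the sum over positions `i ≥ 1`). -/
def lTot {r : ℕ} (η : Fin r → Bool) : ℕ :=
  ∑ i ∈ Finset.univ.filter (fun i : Fin r => 1 ≤ (i : ℕ)), lFrom η i

/-- An elementary operation: either replace the pair `(∧,∧)` at the first two
positions by `(∨,∨)`, or replace a consecutive pair `(∨,∧)` by `(∧,∨)`. -/
def ElemStep {r : ℕ} (η ξ : Fin r → Bool) : Prop :=
  (∃ (h0 : 0 < r) (h1 : 1 < r),
      η ⟨0, h0⟩ = true ∧ η ⟨1, h1⟩ = true ∧ ξ ⟨0, h0⟩ = false ∧ ξ ⟨1, h1⟩ = false ∧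
      ∀ k : Fin r, (k : ℕ) ≠ 0 → (k : ℕ) ≠ 1 → ξ k = η k) ∨
  (∃ i j : Fin r, (j : ℕ) = (i : ℕ) + 1 ∧ η i = false ∧ η j = true ∧
      ξ i = true ∧ ξ j = false ∧ ∀ k : Fin r, k ≠ i → k ≠ j → ξ k = η k)

/-- A chain of `m` elementary operations transforming `η` into `ξ`. -/
def ElemChain {r : ℕ} (η ξ : Fin r → Bool) (m : ℕ) : Prop :=
  ∃ c : ℕ → (Fin r → Bool), c 0 = η ∧ c m = ξ ∧ ∀ k < m, ElemStep (c k) (c (k + 1))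

def flip2 {r : ℕ} (η : Fin r → Bool) (i j : Fin r) : Fin r → Bool :=
  fun k => if k = i then !(η i) else if k = j then !(η j) else η k

lemma flip2_ne {r : ℕ} (η : Fin r → Bool) {i j k : Fin r} (hi : k ≠ i) (hj : k ≠ j) :
    flip2 η i j k = η k := by simp [flip2, hi, hj]

lemma flip2_fst {r : ℕ} (η : Fin r → Bool) (i j : Fin r) : flip2 η i j i = !(η i) := by
  simp [flip2]

lemma flip2_snd {r : ℕ} (η : Fin r → Bool) {i j : Fin r} (h : i ≠ j) :
    flip2 η i j j = !(η j) := by simp [flip2, h.symm]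

lemma flip2_comm {r : ℕ} (η : Fin r → Bool) {i j : Fin r} (h : i ≠ j) :
    flip2 η i j = flip2 η j i := by
  funext k
  by_cases h1 : k = i <;> by_cases h2 : k = j <;>
    simp_all [flip2]

lemma flip2_cancel {r : ℕ} (η : Fin r → Bool) {a b c : Fin r}
    (hab : a ≠ b) (hbc : b ≠ c) (hac : a ≠ c) :
    flip2 (flip2 η a b) b c = flip2 η a c := by
  funext k
  by_cases h1 : k = a <;> by_cases h2 : k = b <;> by_cases h3 : k = c <;>
    simp_all [flip2]

lemma arrowStep_flip2 {r : ℕ} (η : Fin r → Bool) {i j : Fin r} (hij : i < j)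
    (hj : η j = true) : ArrowStep η (flip2 η i j) :=
  ⟨i, j, hij, hj, flip2_fst η i j, flip2_snd η hij.ne,
    fun k h1 h2 => flip2_ne η h1 h2⟩

lemma arrowStep_eq {r : ℕ} {η ξ : Fin r → Bool} (h : ArrowStep η ξ) :
    ∃ i j, i < j ∧ η j = true ∧ ξ = flip2 η i j := by
  obtain ⟨i, j, hij, hj, hi', hj', hk⟩ := h
  refine ⟨i, j, hij, hj, funext fun k => ?_⟩
  by_cases h1 : k = i
  · subst h1; rw [flip2_fst, hi']
  · by_cases h2 : k = j
    · subst h2; rw [flip2_snd _ hij.ne, hj']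
    · rw [flip2_ne _ h1 h2, hk k h1 h2]

lemma lTot_eq {r : ℕ} (η : Fin r → Bool) :
    lTot η = ∑ j : Fin r, (if η j = true then (j : ℕ) else 0) := by
  unfold lTot lFrom
  rw [Finset.sum_filter]
  have h1 : ∀ i : Fin r, (if 1 ≤ (i:ℕ) then (Finset.univ.filter fun j => i ≤ j ∧ η j = true).card else 0)
      = ∑ j : Fin r, if 1 ≤ (i:ℕ) ∧ i ≤ j ∧ η j = true then 1 else 0 := by
    intro i
    rw [Finset.card_filter]
    split_ifs with h
    · exact Finset.sum_congr rfl fun j _ => by simp [h]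
    · exact (Finset.sum_eq_zero fun j _ => by simp [h]).symm
  simp_rw [h1]
  rw [Finset.sum_comm]
  apply Finset.sum_congr rfl
  intro j _
  have hr : 0 < r := j.pos
  by_cases hj : η j = true
  · rw [if_pos hj]
    have h2 : ∀ i : Fin r, (if 1 ≤ (i:ℕ) ∧ i ≤ j ∧ η j = true then (1:ℕ) else 0)
        = if i ∈ Finset.Ioc (⟨0, hr⟩ : Fin r) j then 1 else 0 := by
      intro i
      congr 1
      simp only [Finset.mem_Ioc, eq_iff_iff]
      constructor
      · rintro ⟨a, b, -⟩; exact ⟨by rwa [Fin.lt_def], b⟩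
      · rintro ⟨a, b⟩; exact ⟨by rwa [Fin.lt_def] at a, b, hj⟩
    simp_rw [h2]
    rw [← Finset.card_filter]
    rw [Finset.filter_mem_eq_inter, Finset.univ_inter, Fin.card_Ioc]; simp
  · rw [if_neg hj]
    exact Finset.sum_eq_zero fun i _ => by simp [hj]

lemma sum_two_erase {r : ℕ} (f : Fin r → ℕ) {i j : Fin r} (hij : i ≠ j) :
    ∑ k, f k = f i + f j + ∑ k ∈ (Finset.univ.erase i).erase j, f k := by
  rw [← Finset.add_sum_erase _ f (Finset.mem_univ i),
    ← Finset.add_sum_erase _ f (Finset.mem_erase.mpr ⟨hij.symm, Finset.mem_univ j⟩)]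
  ring

lemma lTot_flip2 {r : ℕ} (η : Fin r → Bool) {i j : Fin r} (hij : i ≠ j) :
    lTot (flip2 η i j) + (if η i = true then (i : ℕ) else 0)
        + (if η j = true then (j : ℕ) else 0)
      = lTot η + (if η i = true then 0 else (i : ℕ))
        + (if η j = true then 0 else (j : ℕ)) := by
  rw [lTot_eq, lTot_eq, sum_two_erase _ hij, sum_two_erase _ hij]
  have he : ∑ k ∈ (Finset.univ.erase i).erase j, (if flip2 η i j k = true then (k : ℕ) else 0)
      = ∑ k ∈ (Finset.univ.erase i).erase j, (if η k = true then (k : ℕ) else 0) := by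
    refine Finset.sum_congr rfl fun k hk => ?_
    rw [flip2_ne η (Finset.mem_of_mem_erase hk |> Finset.ne_of_mem_erase)
      (Finset.ne_of_mem_erase hk)]
  rw [he, flip2_fst, flip2_snd _ hij]
  cases hi : η i <;> cases hj : η j <;> simp <;> ring

lemma lTot_arrow_lt {r : ℕ} {η ξ : Fin r → Bool} (h : ArrowStep η ξ) :
    lTot ξ < lTot η := by
  obtain ⟨i, j, hij, hj, rfl⟩ := arrowStep_eq h
  have := lTot_flip2 η hij.ne
  have hlt : (i : ℕ) < (j : ℕ) := hij
  rw [hj] at this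
  cases hi : η i <;> rw [hi] at this <;> simp at this <;> omega

lemma lTot_elemStep {r : ℕ} {η ξ : Fin r → Bool} (h : ElemStep η ξ) :
    lTot η = lTot ξ + 1 := by
  rcases h with ⟨h0, h1, hη0, hη1, hξ0, hξ1, hk⟩ | ⟨i, j, hji, hi, hj, hξi, hξj, hk⟩
  · set z : Fin r := ⟨0, h0⟩
    set e : Fin r := ⟨1, h1⟩
    have hze : z ≠ e := by simp [z, e, Fin.ext_iff]
    have hξ : ξ = flip2 η z e := by
      funext k
      by_cases hk1 : k = z
      · subst hk1; rw [flip2_fst, hη0, hξ0]; rfl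
      · by_cases hk2 : k = e
        · subst hk2; rw [flip2_snd _ hze, hη1, hξ1]; rfl
        · rw [flip2_ne _ hk1 hk2]
          exact hk k (by simpa [Fin.ext_iff, z] using hk1) (by simpa [Fin.ext_iff, e] using hk2)
    subst hξ
    have := lTot_flip2 η hze
    rw [hη0, hη1] at this
    have hz0 : (z : ℕ) = 0 := rfl
    have he1 : (e : ℕ) = 1 := rfl
    rw [hz0, he1] at this
    simp at this
    omega
  · have hij : i ≠ j := by intro h; rw [h] at hji; omega
    have hξ : ξ = flip2 η i j := by
      funext k
      by_cases hk1 : k = i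
      · subst hk1; rw [flip2_fst, hi, hξi]; rfl
      · by_cases hk2 : k = j
        · subst hk2; rw [flip2_snd _ hij, hj, hξj]; rfl
        · rw [flip2_ne _ hk1 hk2]; exact hk k hk1 hk2
    subst hξ
    have := lTot_flip2 η hij
    rw [hi, hj] at this
    simp at this
    omega

lemma elemStep_swap {r : ℕ} (η : Fin r → Bool) {i j : Fin r} (hji : (j:ℕ) = (i:ℕ) + 1)
    (hi : η i = false) (hj : η j = true) : ElemStep η (flip2 η i j) := by
  have hij : i ≠ j := fun h => by rw [h] at hji; omega
  exact Or.inr ⟨i, j, hji, hi, hj, by rw [flip2_fst, hi]; rfl,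
    by rw [flip2_snd _ hij, hj]; rfl, fun k h1 h2 => flip2_ne η h1 h2⟩

lemma elemStep_annih {r : ℕ} (η : Fin r → Bool) (h1 : 1 < r)
    (ha : η ⟨0, by omega⟩ = true) (hb : η ⟨1, h1⟩ = true) :
    ElemStep η (flip2 η ⟨0, by omega⟩ ⟨1, h1⟩) := by
  have hz : (⟨0, by omega⟩ : Fin r) ≠ ⟨1, h1⟩ := Fin.ne_of_val_ne (by simp)
  exact Or.inl ⟨by omega, h1, ha, hb, by rw [flip2_fst, ha]; rfl,
    by rw [flip2_snd _ hz, hb]; rfl,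
    fun k hk0 hk1 => flip2_ne η (Fin.ne_of_val_ne (by simpa using hk0))
      (Fin.ne_of_val_ne (by simpa using hk1))⟩

lemma elemChain_nil {r : ℕ} (η : Fin r → Bool) : ElemChain η η 0 :=
  ⟨fun _ => η, rfl, rfl, fun k hk => absurd hk (by omega)⟩

lemma elemChain_cons {r : ℕ} {η ν ξ : Fin r → Bool} {m : ℕ} (h : ElemStep η ν)
    (hc : ElemChain ν ξ m) : ElemChain η ξ (m + 1) := by
  obtain ⟨c, hc0, hcm, hstep⟩ := hc
  refine ⟨fun k => if k = 0 then η else c (k - 1), rfl, by simp [hcm], ?_⟩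
  intro k hk
  rcases Nat.eq_zero_or_pos k with rfl | hpos
  · simpa [hc0] using h
  · have h1 : ¬(k = 0) := by omega
    have h2 : ¬(k + 1 = 0) := by omega
    simp only [h1, h2, if_false]
    have : k - 1 + 1 = k + 1 - 1 := by omega
    rw [← this]
    exact hstep (k - 1) (by omega)

lemma elemChain_tail {r : ℕ} {η ξ : Fin r → Bool} {m : ℕ} (hc : ElemChain η ξ (m + 1)) :
    ∃ ν, ElemStep η ν ∧ ElemChain ν ξ m := by
  obtain ⟨c, hc0, hcm, hstep⟩ := hc
  exact ⟨c 1, hc0 ▸ hstep 0 (by omega), fun k => c (k + 1), rfl, hcm, fun k hk =>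
    hstep (k + 1) (by omega)⟩

lemma exists_elemStep_of_arrowStep {r : ℕ} {η ξ : Fin r → Bool} (h : ArrowStep η ξ) :
    ∃ μ, ElemStep η μ ∧ Relation.ReflTransGen ArrowStep μ ξ := by
  obtain ⟨i, j, hij, hj, rfl⟩ := arrowStep_eq h
  have hijv : (i : ℕ) < (j : ℕ) := hij
  have hijne : i ≠ j := hij.ne
  cases hi : η i
  case false =>
    -- move a true from j leftwards to i
    have hjS : j ∈ Finset.univ.filter (fun k : Fin r => i < k ∧ k ≤ j ∧ η k = true) := by
      simp [hij, hj]
    set S := Finset.univ.filter (fun k : Fin r => i < k ∧ k ≤ j ∧ η k = true) with hS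
    have hne : S.Nonempty := ⟨j, hjS⟩
    set q := S.min' hne with hqdef
    have hqS : q ∈ S := S.min'_mem hne
    rw [hS, Finset.mem_filter] at hqS
    obtain ⟨-, hiq, hqj, hηq⟩ := hqS
    have hiqv : (i:ℕ) < q := hiq
    have hqjv : (q:ℕ) ≤ j := hqj
    have hmin : ∀ k : Fin r, i < k → k < q → η k = false := by
      intro k hik hkq
      by_contra hc
      have hkS : k ∈ S := by
        rw [hS, Finset.mem_filter]
        exact ⟨Finset.mem_univ _, hik, le_trans hkq.le hqj,
          by revert hc; cases η k <;> simp⟩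
      have := S.min'_le k hkS
      rw [← hqdef] at this
      exact absurd (lt_of_lt_of_le hkq this) (lt_irrefl _)
    set p : Fin r := ⟨(q:ℕ) - 1, by omega⟩ with hpdef
    have hpv : (p:ℕ) = (q:ℕ) - 1 := rfl
    have hqp : (q:ℕ) = (p:ℕ) + 1 := by omega
    have hpq : p < q := by rw [Fin.lt_def]; omega
    have hip : (i:ℕ) ≤ (p:ℕ) := by omega
    have hηp : η p = false := by
      rcases eq_or_lt_of_le hip with hepv | hltv
      · have : i = p := Fin.ext hepv
        rw [← this]; exact hi
      · exact hmin p (by rwa [Fin.lt_def]) hpq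
    refine ⟨flip2 η p q, elemStep_swap η hqp hηp hηq, ?_⟩
    have step1 : Relation.ReflTransGen ArrowStep (flip2 η p q) (flip2 η i q) := by
      rcases eq_or_lt_of_le hip with hepv | hltv
      · rw [show i = p from Fin.ext hepv]
      · have hipf : i < p := by rwa [Fin.lt_def]
        have harr := arrowStep_flip2 (flip2 η p q) hipf
          (by rw [flip2_fst, hηp]; rfl)
        have heq : flip2 (flip2 η p q) i p = flip2 η i q := by
          rw [flip2_comm η hpq.ne, flip2_comm (flip2 η q p) hipf.ne,
            flip2_cancel η hpq.ne' hipf.ne' (by exact fun hh => by rw [hh] at hiqv; omega),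
            flip2_comm η (by exact fun hh => by rw [hh] at hiqv; omega)]
        exact Relation.ReflTransGen.single (heq ▸ harr)
    have step2 : Relation.ReflTransGen ArrowStep (flip2 η i q) (flip2 η i j) := by
      rcases eq_or_lt_of_le hqjv with heqv | hltv
      · rw [show q = j from Fin.ext heqv]
      · have hqjf : q < j := by rwa [Fin.lt_def]
        have hjq : j ≠ q := hqjf.ne'
        have hji : j ≠ i := hijne.symm
        have harr := arrowStep_flip2 (flip2 η i q) hqjf
          (by rw [flip2_ne η hji hjq]; exact hj)
        have heq : flip2 (flip2 η i q) q j = flip2 η i j :=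
          flip2_cancel η hiq.ne hqjf.ne hijne
        exact Relation.ReflTransGen.single (heq ▸ harr)
    exact step1.trans step2
  case true =>
    have hr0 : 0 < r := i.pos
    have hjv1 : 1 ≤ (j:ℕ) := by omega
    have hr1 : 1 < r := lt_of_le_of_lt hjv1 j.isLt
    set z : Fin r := ⟨0, hr0⟩ with hzdef
    set e : Fin r := ⟨1, hr1⟩ with hedef
    have hzv : (z:ℕ) = 0 := rfl
    have hev : (e:ℕ) = 1 := rfl
    have hze : z ≠ e := Fin.ne_of_val_ne (by omega)
    cases hz : η z
    case false =>
      -- η 0 = false, so i ≥ 1; bring a true next to a false and swap, then rearrange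
      have hizv : 0 < (i:ℕ) := by
        rcases Nat.eq_zero_or_pos (i:ℕ) with h0 | h0
        · have hxx : η i = false := by rw [show i = z from Fin.ext (by omega)]; exact hz
          simp [hi] at hxx
        · exact h0
      have hiS : i ∈ Finset.univ.filter (fun k : Fin r => k ≤ i ∧ η k = true) := by
        simp [hi]
      set S := Finset.univ.filter (fun k : Fin r => k ≤ i ∧ η k = true) with hS
      have hne : S.Nonempty := ⟨i, hiS⟩
      set p := S.min' hne with hpdef
      have hpS : p ∈ S := S.min'_mem hne
      rw [hS, Finset.mem_filter] at hpS
      obtain ⟨-, hpi, hηp⟩ := hpS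
      have hpiv : (p:ℕ) ≤ (i:ℕ) := hpi
      have hmin : ∀ k : Fin r, k < p → k ≤ i → η k = false := by
        intro k hkp hki
        by_contra hc
        have hkS : k ∈ S := by
          rw [hS, Finset.mem_filter]
          exact ⟨Finset.mem_univ _, hki, by revert hc; cases η k <;> simp⟩
        have := S.min'_le k hkS
        rw [← hpdef] at this
        exact absurd (lt_of_lt_of_le hkp this) (lt_irrefl _)
      have hpv1 : 1 ≤ (p:ℕ) := by
        rcases Nat.eq_zero_or_pos (p:ℕ) with h0 | h0
        · have hxx : η p = false := by rw [show p = z from Fin.ext (by omega)]; exact hz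
          simp [hηp] at hxx
        · exact h0
      set p' : Fin r := ⟨(p:ℕ) - 1, by omega⟩ with hp'def
      have hp'v : (p':ℕ) = (p:ℕ) - 1 := rfl
      have hpp' : (p:ℕ) = (p':ℕ) + 1 := by omega
      have hp'p : p' < p := by rw [Fin.lt_def]; omega
      have hηp' : η p' = false := hmin p' hp'p (by rw [Fin.le_def]; omega)
      refine ⟨flip2 η p' p, elemStep_swap η hpp' hηp' hηp, ?_⟩
      have hp'j : p' < j := by rw [Fin.lt_def]; omega
      have hjp' : j ≠ p' := Fin.ne_of_val_ne (by omega)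
      have hjp : j ≠ p := Fin.ne_of_val_ne (by omega)
      have step1 : Relation.ReflTransGen ArrowStep (flip2 η p' p) (flip2 η p j) := by
        have harr := arrowStep_flip2 (flip2 η p' p) hp'j
          (by rw [flip2_ne η hjp' hjp]; exact hj)
        have heq : flip2 (flip2 η p' p) p' j = flip2 η p j := by
          rw [flip2_comm η hp'p.ne, flip2_cancel η hp'p.ne' hp'j.ne hjp.symm]
        exact Relation.ReflTransGen.single (heq ▸ harr)
      have step2 : Relation.ReflTransGen ArrowStep (flip2 η p j) (flip2 η i j) := by
        rcases eq_or_lt_of_le hpiv with hepv | hltv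
        · rw [show p = i from Fin.ext hepv]
        · have hpif : p < i := by rwa [Fin.lt_def]
          have harr := arrowStep_flip2 (flip2 η p j) hpif
            (by rw [flip2_ne η hpif.ne' hijne]; exact hi)
          have heq : flip2 (flip2 η p j) p i = flip2 η i j := by
            rw [flip2_comm η hjp.symm, flip2_cancel η hjp (by exact hpif.ne)
              (by exact hijne.symm), flip2_comm η hijne.symm]
          exact Relation.ReflTransGen.single (heq ▸ harr)
      exact step1.trans step2
    case true =>
      cases he : η e
      case true =>
        -- annihilate positions 0 and 1
        refine ⟨flip2 η z e, elemStep_annih η hr1 hz he, ?_⟩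
        by_cases hiz : i = z
        · by_cases hje : j = e
          · rw [hiz, hje]
          · have hjv2 : 2 ≤ (j:ℕ) := by
              have : (j:ℕ) ≠ 1 := fun hh => hje (Fin.ext (by omega))
              have : (i:ℕ) = 0 := by simp [hiz, hzv]
              omega
            have hje' : j ≠ e := Fin.ne_of_val_ne (by omega)
            have hjz : j ≠ z := Fin.ne_of_val_ne (by omega)
            have hej : e < j := by rw [Fin.lt_def]; omega
            have harr := arrowStep_flip2 (flip2 η z e) hej
              (by rw [flip2_ne η hjz hje']; exact hj)
            have heq : flip2 (flip2 η z e) e j = flip2 η z j :=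
              flip2_cancel η hze hej.ne hjz.symm
            rw [hiz]
            exact Relation.ReflTransGen.single (heq ▸ harr)
        · have hiv1 : 1 ≤ (i:ℕ) := by
            rcases Nat.eq_zero_or_pos (i:ℕ) with h0 | h0
            · exact absurd (Fin.ext h0 : i = z) hiz
            · exact h0
          by_cases hie : i = e
          · have hjv2 : 2 ≤ (j:ℕ) := by rw [hie] at hijv; omega
            have hjz : j ≠ z := Fin.ne_of_val_ne (by omega)
            have hje' : j ≠ e := Fin.ne_of_val_ne (by omega)
            have hzj : z < j := by rw [Fin.lt_def]; omega
            have harr := arrowStep_flip2 (flip2 η z e) hzj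
              (by rw [flip2_ne η hjz hje']; exact hj)
            have heq : flip2 (flip2 η z e) z j = flip2 η e j := by
              rw [flip2_comm η hze, flip2_cancel η hze.symm hzj.ne hje'.symm]
            rw [hie]
            exact Relation.ReflTransGen.single (heq ▸ harr)
          · have hiv2 : 2 ≤ (i:ℕ) := by
              have : (i:ℕ) ≠ 1 := fun hh => hie (Fin.ext (by omega))
              omega
            have hiz' : i ≠ z := Fin.ne_of_val_ne (by omega)
            have hie' : i ≠ e := Fin.ne_of_val_ne (by omega)
            have hjz : j ≠ z := Fin.ne_of_val_ne (by omega)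
            have hje' : j ≠ e := Fin.ne_of_val_ne (by omega)
            have hzi : z < i := by rw [Fin.lt_def]; omega
            have hej : e < j := by rw [Fin.lt_def]; omega
            have harr1 := arrowStep_flip2 (flip2 η z e) hzi
              (by rw [flip2_ne η hiz' hie']; exact hi)
            have heq1 : flip2 (flip2 η z e) z i = flip2 η e i := by
              rw [flip2_comm η hze, flip2_cancel η hze.symm hzi.ne hie'.symm]
            have harr2 := arrowStep_flip2 (flip2 η e i) hej
              (by rw [flip2_ne η hje' hijne.symm]; exact hj)
            have heq2 : flip2 (flip2 η e i) e j = flip2 η i j := by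
              rw [flip2_comm η hie'.symm, flip2_cancel η hie' hej.ne hijne]
            exact Relation.ReflTransGen.trans
              (Relation.ReflTransGen.single (heq1 ▸ harr1))
              (Relation.ReflTransGen.single (heq2 ▸ harr2))
      case false =>
        -- η 0 = true, η 1 = false
        have hie : i ≠ e := fun hh => by rw [hh, he] at hi; exact absurd hi (by simp)
        have hje : j ≠ e := fun hh => by rw [hh, he] at hj; exact absurd hj (by simp)
        have hjS : j ∈ Finset.univ.filter
            (fun k : Fin r => 0 < (k:ℕ) ∧ k ≤ j ∧ η k = true) := by
          simp [hj]; omega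
        set S := Finset.univ.filter
          (fun k : Fin r => 0 < (k:ℕ) ∧ k ≤ j ∧ η k = true) with hS
        have hne : S.Nonempty := ⟨j, hjS⟩
        set q := S.min' hne with hqdef
        have hqS : q ∈ S := S.min'_mem hne
        rw [hS, Finset.mem_filter] at hqS
        obtain ⟨-, hqv1, hqj, hηq⟩ := hqS
        have hqjv : (q:ℕ) ≤ (j:ℕ) := hqj
        have hmin : ∀ k : Fin r, 0 < (k:ℕ) → k < q → η k = false := by
          intro k hk0 hkq
          by_contra hc
          have hkS : k ∈ S := by
            rw [hS, Finset.mem_filter]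
            refine ⟨Finset.mem_univ _, hk0, le_trans hkq.le hqj,
              by revert hc; cases η k <;> simp⟩
          have := S.min'_le k hkS
          rw [← hqdef] at this
          exact absurd (lt_of_lt_of_le hkq this) (lt_irrefl _)
        have hqv2 : 2 ≤ (q:ℕ) := by
          have : (q:ℕ) ≠ 1 := fun hh => by
            have hxx : η q = false := by rw [show q = e from Fin.ext (by omega)]; exact he
            simp [hηq] at hxx
          omega
        set q' : Fin r := ⟨(q:ℕ) - 1, by omega⟩ with hq'def
        have hq'v : (q':ℕ) = (q:ℕ) - 1 := rfl
        have hqq' : (q:ℕ) = (q':ℕ) + 1 := by omega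
        have hq'q : q' < q := by rw [Fin.lt_def]; omega
        have hηq' : η q' = false := hmin q' (by omega) hq'q
        refine ⟨flip2 η q' q, elemStep_swap η hqq' hηq' hηq, ?_⟩
        have hzq' : z < q' := by rw [Fin.lt_def]; omega
        have hzq : z ≠ q := Fin.ne_of_val_ne (by omega)
        have step1 : Relation.ReflTransGen ArrowStep (flip2 η q' q) (flip2 η z q) := by
          have harr := arrowStep_flip2 (flip2 η q' q) hzq'
            (by rw [flip2_fst, hηq']; rfl)
          have heq : flip2 (flip2 η q' q) z q' = flip2 η z q := by
            rw [flip2_comm (flip2 η q' q) hzq'.ne, flip2_comm η hq'q.ne,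
              flip2_cancel η hq'q.ne' hzq'.ne' hzq.symm, flip2_comm η hzq.symm]
          exact Relation.ReflTransGen.single (heq ▸ harr)
        by_cases hiz : i = z
        · rcases eq_or_lt_of_le hqjv with hev2 | hlt
          · have hxx : flip2 η z q = flip2 η i j := by
              rw [show q = j from Fin.ext hev2, hiz]
            rw [← hxx]
            exact step1
          · have hqjf : q < j := by rwa [Fin.lt_def]
            have hjz : j ≠ z := Fin.ne_of_val_ne (by omega)
            have harr := arrowStep_flip2 (flip2 η z q) hqjf
              (by rw [flip2_ne η hjz hqjf.ne']; exact hj)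
            have heq : flip2 (flip2 η z q) q j = flip2 η z j :=
              flip2_cancel η hzq hqjf.ne hjz.symm
            rw [hiz]
            exact step1.trans (Relation.ReflTransGen.single (heq ▸ harr))
        · have hiv1 : 1 ≤ (i:ℕ) := by
            rcases Nat.eq_zero_or_pos (i:ℕ) with h0 | h0
            · exact absurd (Fin.ext h0 : i = z) hiz
            · exact h0
          have hqi : (q:ℕ) ≤ (i:ℕ) := by
            have hiS : i ∈ S := by
              rw [hS, Finset.mem_filter]
              exact ⟨Finset.mem_univ _, by omega, hij.le, hi⟩
            have := S.min'_le i hiS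
            rw [← hqdef] at this
            exact this
          have hjz : j ≠ z := Fin.ne_of_val_ne (by omega)
          have hzj : z < j := by rw [Fin.lt_def]; omega
          rcases eq_or_lt_of_le hqi with hev2 | hlt
          · have hqieq : q = i := Fin.ext hev2
            have harr := arrowStep_flip2 (flip2 η z q) hzj
              (by rw [flip2_ne η hjz (by rw [hqieq]; exact hijne.symm)]; exact hj)
            have heq : flip2 (flip2 η z q) z j = flip2 η i j := by
              rw [hqieq, flip2_comm η (Fin.ne_of_val_ne (by omega) : z ≠ i),
                flip2_cancel η (Fin.ne_of_val_ne (by omega) : i ≠ z) hzj.ne hijne]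
            exact step1.trans (Relation.ReflTransGen.single (heq ▸ harr))
          · have hqif : q < i := by rwa [Fin.lt_def]
            have harr1 := arrowStep_flip2 (flip2 η z q) hqif
              (by rw [flip2_ne η (Fin.ne_of_val_ne (by omega) : i ≠ z) hqif.ne']; exact hi)
            have heq1 : flip2 (flip2 η z q) q i = flip2 η z i :=
              flip2_cancel η hzq hqif.ne (Fin.ne_of_val_ne (by omega))
            have harr2 := arrowStep_flip2 (flip2 η z i) hzj
              (by rw [flip2_ne η hjz hijne.symm]; exact hj)
            have heq2 : flip2 (flip2 η z i) z j = flip2 η i j := by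
              rw [flip2_comm η (Fin.ne_of_val_ne (by omega) : z ≠ i),
                flip2_cancel η (Fin.ne_of_val_ne (by omega) : i ≠ z) hzj.ne hijne]
            exact step1.trans (Relation.ReflTransGen.trans
              (Relation.ReflTransGen.single (heq1 ▸ harr1))
              (Relation.ReflTransGen.single (heq2 ▸ harr2)))

lemma lTot_prec_le {r : ℕ} {η ξ : Fin r → Bool}
    (h : Relation.ReflTransGen ArrowStep η ξ) : lTot ξ ≤ lTot η := by
  induction h with
  | refl => exact le_rfl
  | tail _ hbc ih => exact le_trans (lTot_arrow_lt hbc).le ih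

lemma chain_of_prec {r : ℕ} (n : ℕ) : ∀ (η ξ : Fin r → Bool), lTot η ≤ n →
    Relation.ReflTransGen ArrowStep η ξ → ElemChain η ξ (lTot η - lTot ξ) := by
  induction n with
  | zero =>
    intro η ξ hn h
    rcases h.cases_head with rfl | ⟨b, hstep, _⟩
    · rw [Nat.sub_self]; exact elemChain_nil η
    · exact absurd (lTot_arrow_lt hstep) (by omega)
  | succ n ih =>
    intro η ξ hn h
    rcases h.cases_head with rfl | ⟨b, hstep, hrest⟩
    · rw [Nat.sub_self]; exact elemChain_nil η
    · obtain ⟨μ, helem, hmu⟩ := exists_elemStep_of_arrowStep hstep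
      have hμξ := hmu.trans hrest
      have h1 : lTot η = lTot μ + 1 := lTot_elemStep helem
      have h2 : lTot ξ ≤ lTot μ := lTot_prec_le hμξ
      have hch := elemChain_cons helem (ih μ ξ (by omega) hμξ)
      have heq : lTot μ - lTot ξ + 1 = lTot η - lTot ξ := by omega
      rwa [heq] at hch

lemma chain_len {r : ℕ} : ∀ (m : ℕ) (η ξ : Fin r → Bool),
    ElemChain η ξ m → lTot ξ + m = lTot η := by
  intro m
  induction m with
  | zero =>
    rintro η ξ ⟨c, h0, hm, -⟩
    rw [← h0, ← hm]
    omega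
  | succ n ih =>
    intro η ξ hc
    obtain ⟨ν, hs, hc'⟩ := elemChain_tail hc
    have h1 := ih ν ξ hc'
    have h2 := lTot_elemStep hs
    omega

/-- if `ξ ⪯ η`, then `ξ` can be obtained from `η` by a chain of exactly
`l(η,ξ) = l(η) − l(ξ)` elementary operations, and every chain of elementary
operations transforming `η` into `ξ` has length exactly `l(η,ξ)`. -/
theorem lTot_sub_eq_min_elemChain {r : ℕ} (ξ η : Fin r → Bool) (h : PrecEq ξ η) :
    ElemChain η ξ (lTot η - lTot ξ) ∧
      ∀ m : ℕ, ElemChain η ξ m → m = lTot η - lTot ξ := by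
  have hrtg : Relation.ReflTransGen ArrowStep η ξ := h
  constructor
  · exact chain_of_prec (lTot η) η ξ le_rfl hrtg
  · intro m hm
    have h1 := chain_len m η ξ hm
    have h2 := lTot_prec_le hrtg
    omega
end

section
/- Let Λ be a finite poset with a subset Λ̃ ⊆ Λ, a poset Λ′, and a surjective 2-to-1 order-preserving map ν ↦ ν′ from Λ̃ onto Λ′ whose fibers are written {ν⁺, ν⁻} with ν⁻ ≺ ν⁺. Let (d_{λμ})_{λ,μ∈Λ} and (d′_{λ′μ′})_{λ′,μ′∈Λ′} be lower uni-triangular matrices over ℤ[q] with inverses (p_{λμ}) = ((d(−q)))⁻¹ and (p′_{λ′μ′}) = ((d′(−q)))⁻¹. Suppose that for every λ = λ⁺ ∈ Λ̃: d_{λ⁺μ⁺} = d′_{λ′μ′} and d_{λ⁺μ⁻} = q·d′_{λ′μ′} for all μ ∈ Λ̃, and d_{λ⁺μ} = 0 for μ ∈ Λ not of the form μ±. Then for every λ = λ⁺ ∈ Λ̃: p_{λ⁺μ⁺} = p′_{λ′μ′} + q·p_{λ⁻μ⁺} for all μ⁺, and p_{λ⁺μ} = q·p_{λ⁻μ} for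 all μ ∈ Λ not of the form μ⁺. -/
/-- abstract translation-projection recursion for the `p`-polynomials.
`Λ̃ ⊆ Λ` is encoded as the (disjoint) union of the ranges of the fiber maps
`plus, minus : Λ' → Λ`, so that the fiber of `ν' ∈ Λ'` is `{ν⁺, ν⁻} = {plus ν', minus ν'}`
with `ν⁻ ≺ ν⁺`, the map `ν ↦ ν'` being 2-to-1, surjective and order-preserving. -/
theorem translation_projection_recursion {Λ Λ' : Type*}
    [Fintype Λ] [Fintype Λ'] [DecidableEq Λ] [DecidableEq Λ']
    [PartialOrder Λ] [PartialOrder Λ']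
    (plus minus : Λ' → Λ)
    (hinj : Function.Injective (Sum.elim plus minus : Λ' ⊕ Λ' → Λ))
    (hlt : ∀ l' : Λ', minus l' < plus l')
    (hmono : ∀ l' m' : Λ', l' ≤ m' → plus l' ≤ plus m' ∧ minus l' ≤ minus m')
    (D P : Matrix Λ Λ (Polynomial ℤ)) (D' P' : Matrix Λ' Λ' (Polynomial ℤ))
    (hdiag : ∀ l : Λ, D l l = 1) (htri : ∀ l m : Λ, D l m ≠ 0 → m ≤ l)
    (hdiag' : ∀ l' : Λ', D' l' l' = 1) (htri' : ∀ l' m' : Λ', D' l' m' ≠ 0 → m' ≤ l')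
    (hdpp : ∀ l' m' : Λ', D (plus l') (plus m') = D' l' m')
    (hdpm : ∀ l' m' : Λ', D (plus l') (minus m') = Polynomial.X * D' l' m')
    (hdp0 : ∀ (l' : Λ') (m : Λ), (∀ m' : Λ', m ≠ plus m' ∧ m ≠ minus m') →
      D (plus l') m = 0)
    (hinv1 : (Matrix.of fun l m : Λ => (D l m).comp (-Polynomial.X)) * P = 1)
    (hinv2 : P * (Matrix.of fun l m : Λ => (D l m).comp (-Polynomial.X)) = 1)
    (hinv1' : (Matrix.of fun l' m' : Λ' => (D' l' m').comp (-Polynomial.X)) * P' = 1)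
    (hinv2' : P' * (Matrix.of fun l' m' : Λ' => (D' l' m').comp (-Polynomial.X)) = 1) :
    (∀ l' m' : Λ',
        P (plus l') (plus m') = P' l' m' + Polynomial.X * P (minus l') (plus m')) ∧
    (∀ (l' : Λ') (m : Λ), (∀ m' : Λ', m ≠ plus m') →
        P (plus l') m = Polynomial.X * P (minus l') m) := by
  classical
  have hplus : Function.Injective plus := fun a b h => by
    have : (Sum.inl a : Λ' ⊕ Λ') = Sum.inl b := hinj (by simpa using h)
    simpa using this
  have hminus : Function.Injective minus := fun a b h => by
    have : (Sum.inr a : Λ' ⊕ Λ') = Sum.inr b := hinj (by simpa using h)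
    simpa using this
  have hpm : ∀ a b : Λ', plus a ≠ minus b := fun a b h => by
    have : (Sum.inl a : Λ' ⊕ Λ') = Sum.inr b := hinj (by simpa using h)
    simp at this
  set E : Matrix Λ Λ (Polynomial ℤ) :=
    Matrix.of fun l m : Λ => (D l m).comp (-Polynomial.X) with hE
  set E' : Matrix Λ' Λ' (Polynomial ℤ) :=
    Matrix.of fun l' m' : Λ' => (D' l' m').comp (-Polynomial.X) with hE'
  -- resolve the `choose` of the existence of a preimage under `plus`
  have hch : ∀ (a : Λ') (h : ∃ b, plus b = plus a), h.choose = a :=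
    fun a h => hplus h.choose_spec
  -- the candidate matrix
  set Q : Matrix Λ Λ (Polynomial ℤ) := Matrix.of fun l m =>
    if h : ∃ l'', plus l'' = l then
      Polynomial.X * P (minus h.choose) m +
        (if h2 : ∃ m'', plus m'' = m then P' h.choose h2.choose else 0)
    else P l m with hQdef
  have hQplus : ∀ (l' : Λ') (m : Λ), Q (plus l') m =
      Polynomial.X * P (minus l') m +
        (if h2 : ∃ m'', plus m'' = m then P' l' h2.choose else 0) := by
    intro l' m
    have h : ∃ l'', plus l'' = plus l' := ⟨l', rfl⟩
    simp only [hQdef, Matrix.of_apply, dif_pos h, hch l' h]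
  have hQnot : ∀ l m : Λ, (¬ ∃ l'', plus l'' = l) → Q l m = P l m := by
    intro l m h
    simp only [hQdef, Matrix.of_apply, dif_neg h]
  -- entries of E on `plus` rows
  have hEpp : ∀ l' m' : Λ', E (plus l') (plus m') = E' l' m' := by
    intro l' m'; simp [hE, hE', hdpp]
  have hEpm : ∀ l' m' : Λ', E (plus l') (minus m') = -Polynomial.X * E' l' m' := by
    intro l' m'
    simp [hE, hE', hdpm, Polynomial.mul_comp]
  have hEp0 : ∀ (l' : Λ') (m : Λ), (∀ m' : Λ', m ≠ plus m' ∧ m ≠ minus m') →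
      E (plus l') m = 0 := by
    intro l' m hm
    simp [hE, hdp0 l' m hm]
  -- the reindexing of sums over the image of `plus`
  have sum_plus : ∀ (c : Λ' → Polynomial ℤ) (g : Λ → Polynomial ℤ),
      (∑ k, (if h2 : ∃ m'', plus m'' = k then c h2.choose else 0) * g k)
        = ∑ m', c m' * g (plus m') := by
    intro c g
    rw [show (∑ m', c m' * g (plus m')) =
        ∑ k ∈ Finset.univ.image plus,
          (if h2 : ∃ m'', plus m'' = k then c h2.choose else 0) * g k from ?_]
    · refine (Finset.sum_subset (Finset.subset_univ _) ?_).symm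
      intro k _ hk
      have : ¬ ∃ m'', plus m'' = k := by
        rintro ⟨m'', rfl⟩
        exact hk (Finset.mem_image_of_mem _ (Finset.mem_univ _))
      rw [dif_neg this, zero_mul]
    · rw [Finset.sum_image (fun a _ b _ h => hplus h)]
      refine Finset.sum_congr rfl fun m' _ => ?_
      have h : ∃ m'', plus m'' = plus m' := ⟨m', rfl⟩
      rw [dif_pos h, hch m' h]
  -- the key identity : Q * E = 1
  have key : Q * E = 1 := by
    refine Matrix.ext fun l m => ?_
    by_cases hl : ∃ l'', plus l'' = l
    · obtain ⟨l', rfl⟩ := hl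
      rw [Matrix.mul_apply]
      have hsplit : ∀ k, Q (plus l') k * E k m =
          Polynomial.X * (P (minus l') k * E k m) +
          (if h2 : ∃ m'', plus m'' = k then P' l' h2.choose else 0) * E k m := by
        intro k; rw [hQplus]; ring
      rw [Finset.sum_congr rfl fun k _ => hsplit k, Finset.sum_add_distrib,
        ← Finset.mul_sum, ← Matrix.mul_apply, hinv2, sum_plus]
      by_cases hm1 : ∃ n', plus n' = m
      · obtain ⟨n', rfl⟩ := hm1
        have h1 : (1 : Matrix Λ Λ (Polynomial ℤ)) (minus l') (plus n') = 0 := by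
          rw [Matrix.one_apply_ne]
          exact fun h => hpm n' l' h.symm
        rw [h1, mul_zero, zero_add,
          Finset.sum_congr rfl fun m' _ => by rw [hEpp m' n'],
          ← Matrix.mul_apply, hinv2']
        by_cases h : l' = n'
        · subst h; simp [Matrix.one_apply]
        · rw [Matrix.one_apply_ne h, Matrix.one_apply_ne (fun hc => h (hplus hc))]
      · by_cases hm2 : ∃ n', minus n' = m
        · obtain ⟨n', rfl⟩ := hm2
          rw [Finset.sum_congr rfl fun m' _ => by rw [hEpm m' n'],
            show (∑ m', P' l' m' * (-Polynomial.X * E' m' n')) =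
              -Polynomial.X * ∑ m', P' l' m' * E' m' n' from by
                rw [Finset.mul_sum]; exact Finset.sum_congr rfl fun m' _ => by ring,
            ← Matrix.mul_apply, hinv2']
          rw [Matrix.one_apply_ne (fun hc => hpm l' n' hc)]
          by_cases h : l' = n'
          · subst h; rw [Matrix.one_apply_eq, Matrix.one_apply_eq]; ring
          · rw [Matrix.one_apply_ne (fun hc : minus l' = minus n' => h (hminus hc)),
              Matrix.one_apply_ne (fun hc : l' = n' => h hc)]
            ring
        · have h0 : ∀ m' : Λ', E (plus m') m = 0 := by
            intro m'
            refine hEp0 m' m fun n' => ⟨?_, ?_⟩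
            · exact fun h => hm1 ⟨n', h.symm⟩
            · exact fun h => hm2 ⟨n', h.symm⟩
          rw [Finset.sum_congr rfl fun m' _ => by rw [h0 m', mul_zero],
            Finset.sum_const_zero, add_zero]
          have h1 : (1 : Matrix Λ Λ (Polynomial ℤ)) (minus l') m = 0 := by
            rw [Matrix.one_apply_ne]
            exact fun h => hm2 ⟨l', h⟩
          have h2 : (1 : Matrix Λ Λ (Polynomial ℤ)) (plus l') m = 0 := by
            rw [Matrix.one_apply_ne]
            exact fun h => hm1 ⟨l', h⟩
          rw [h1, h2, mul_zero]
    · rw [Matrix.mul_apply,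
        Finset.sum_congr rfl fun k _ => by rw [hQnot _ k hl],
        ← Matrix.mul_apply, hinv2]
  -- conclude Q = P
  have hQP : Q = P := by
    have h1 : Q * E * P = P := by rw [key, one_mul]
    rwa [mul_assoc, hinv1, mul_one] at h1
  constructor
  · intro l' m'
    have := congrFun (congrFun hQP (plus l')) (plus m')
    rw [hQplus] at this
    have h2 : ∃ m'', plus m'' = plus m' := ⟨m', rfl⟩
    rw [dif_pos h2, hch m' h2] at this
    rw [← this]; ring
  · intro l' m hm
    have := congrFun (congrFun hQP (plus l')) m
    rw [hQplus] at this
    have h2 : ¬ ∃ m'', plus m'' = m := by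
      rintro ⟨m'', rfl⟩; exact hm m'' rfl
    rw [dif_neg h2, add_zero] at this
    exact this.symm
end

section
/- Let Λ be a finite poset and let (e_{λμ}) be a lower uni-triangular matrix over ℤ[q] with inverse (r_{λμ}) of (e_{λμ}(−q)). Suppose every nonzero e_{λμ} with λ ≠ μ lies in qℤ[q]. Then for the matrix (t_{λμ}) defined by t_{λμ} = Σ_{ν ⪯ λ, ν ⪯ μ} r_{λν} r_{μν}, each t_{λμ} with λ ≠ μ lies in qℤ[q], and t_{λλ} has constant term 1. -/
/-- let `(e_{λμ})` be lower uni-triangular over `ℤ[q]` with off-diagonal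
entries in `qℤ[q]`, and let `(r_{λμ})` be the inverse of `(e_{λμ}(−q))`. Then the
matrix `t_{λμ} = Σ_{ν ⪯ λ, ν ⪯ μ} r_{λν} r_{μν}` has off-diagonal entries in `qℤ[q]`
and its diagonal entries have constant term `1`. -/
theorem t_matrix_constant_terms {Λ : Type*} [Fintype Λ] [DecidableEq Λ] [PartialOrder Λ]
    [DecidableRel ((· ≤ ·) : Λ → Λ → Prop)]
    (E Rm : Matrix Λ Λ (Polynomial ℤ))
    (hdiag : ∀ l : Λ, E l l = 1)
    (htri : ∀ l m : Λ, E l m ≠ 0 → m ≤ l)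
    (hconst : ∀ l m : Λ, l ≠ m → (E l m).coeff 0 = 0)
    (hinv1 : (Matrix.of fun l m : Λ => (E l m).comp (-Polynomial.X)) * Rm = 1)
    (hinv2 : Rm * (Matrix.of fun l m : Λ => (E l m).comp (-Polynomial.X)) = 1) :
    (∀ l m : Λ, l ≠ m →
      (∑ ν ∈ Finset.univ.filter (fun ν : Λ => ν ≤ l ∧ ν ≤ m), Rm l ν * Rm m ν).coeff 0 = 0) ∧
    (∀ l : Λ,
      (∑ ν ∈ Finset.univ.filter (fun ν : Λ => ν ≤ l ∧ ν ≤ l), Rm l ν * Rm l ν).coeff 0 = 1) := by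
  set f : Polynomial ℤ →+* ℤ := Polynomial.evalRingHom 0 with hf
  have hM1 : (Matrix.of fun l m : Λ => (E l m).comp (-Polynomial.X)).map f = 1 := by
    ext i j
    simp only [Matrix.map_apply, Matrix.of_apply, hf, Polynomial.coe_evalRingHom,
      Polynomial.eval_comp, Polynomial.eval_neg, Polynomial.eval_X, neg_zero]
    by_cases h : i = j
    · subst h
      simp [hdiag i, Matrix.one_apply_eq]
    · rw [Matrix.one_apply_ne h, ← Polynomial.coeff_zero_eq_eval_zero, hconst i j h]
  have hR : Rm.map f = 1 := by
    have := congrArg (Matrix.map · f) hinv1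
    simpa [Matrix.map_mul, hM1] using this
  have hRe : ∀ l ν : Λ, (Rm l ν).eval 0 = if l = ν then 1 else 0 := by
    intro l ν
    have := congrFun (congrFun hR l) ν
    simpa [Matrix.map_apply, hf, Matrix.one_apply] using this
  have key : ∀ l m : Λ,
      (∑ ν ∈ Finset.univ.filter (fun ν : Λ => ν ≤ l ∧ ν ≤ m), Rm l ν * Rm m ν).coeff 0
        = if l = m then 1 else 0 := by
    intro l m
    rw [Polynomial.coeff_zero_eq_eval_zero, Polynomial.eval_finset_sum]
    have : ∀ ν ∈ Finset.univ.filter (fun ν : Λ => ν ≤ l ∧ ν ≤ m),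
        (Rm l ν * Rm m ν).eval 0 = if ν = l ∧ ν = m then 1 else 0 := by
      intro ν _
      rw [Polynomial.eval_mul, hRe, hRe]
      by_cases h1 : l = ν <;> by_cases h2 : m = ν <;>
        simp [h1, h2, eq_comm]
    rw [Finset.sum_congr rfl this]
    by_cases h : l = m
    · subst h
      simp [Finset.sum_ite_eq']
    · rw [if_neg h]
      refine Finset.sum_eq_zero fun ν _ => ?_
      rw [if_neg]
      rintro ⟨rfl, rfl⟩
      exact h rfl
  constructor
  · intro l m hlm
    rw [key, if_neg hlm]
  · intro l
    rw [key, if_pos rfl]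
end
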